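/- Fix d ≥ 1 and r ∈ (0,1). If y ∈ ℝ^d satisfies (d·r + √d·(d+1))·‖y‖ < r, then √d·Σᵢ yᵢ < 1 and the point x = (√d(d+1)/(1 - √d·Σᵢ yᵢ))·y satisfies ‖x‖ < r. Consequently the open ball B(0, r/(d·r + √d(d+1))) is contained in the image of B(0,r) under Φ(x) = (1/√d)·x/(d+1+Σᵢ xᵢ). -/

import Mathlib

open scoped BigOperators

lemma sum_le_sqrt_mul_norm (d : ℕ) (y : EuclideanSpace ℝ (Fin d)) :
    ∑ i, y i ≤ Real.sqrt d * ‖y‖ := by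
  let o : EuclideanSpace ℝ (Fin d) := (EuclideanSpace.equiv (Fin d) ℝ).symm (fun _ => 1)
  have h := real_inner_le_norm o y
  have h1 : (inner ℝ o y : ℝ) = ∑ i, y i := by
    simp [o, PiLp.inner_apply, RCLike.inner_apply]
  have h2 : ‖o‖ = Real.sqrt d := by
    simp [o, EuclideanSpace.norm_eq]
  rw [h1, h2] at h
  exact h

theorem stmt3 (d : ℕ) (hd : 1 ≤ d) (r : ℝ) (hr : r ∈ Set.Ioo (0 : ℝ) 1) :
    (∀ y : EuclideanSpace ℝ (Fin d),
      (d * r + Real.sqrt d * (d + 1)) * ‖y‖ < r →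
        Real.sqrt d * ∑ i, y i < 1 ∧
        ‖(Real.sqrt d * (d + 1) / (1 - Real.sqrt d * ∑ i, y i)) • y‖ < r) ∧
    Metric.ball (0 : EuclideanSpace ℝ (Fin d)) (r / (d * r + Real.sqrt d * (d + 1))) ⊆
      (fun x : EuclideanSpace ℝ (Fin d) =>
        ((Real.sqrt d * (d + 1 + ∑ i, x i))⁻¹ : ℝ) • x) '' Metric.ball 0 r := by
  obtain ⟨hr0, hr1⟩ := hr
  set s := Real.sqrt d with hs_def
  have hd1 : (1 : ℝ) ≤ (d : ℝ) := by exact_mod_cast hd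
  have hs0 : 0 < s := Real.sqrt_pos.mpr (by linarith)
  have hss : s * s = d := Real.mul_self_sqrt (by linarith)
  have hsd : s ≤ d := by
    nlinarith [Real.sq_sqrt (show (0:ℝ) ≤ d by linarith), Real.sqrt_le_sqrt hd1,
      Real.sqrt_one]
  have hden : (0:ℝ) < d * r + s * (d + 1) := by positivity
  have key : ∀ y : EuclideanSpace ℝ (Fin d),
      (d * r + s * (d + 1)) * ‖y‖ < r →
        s * ∑ i, y i < 1 ∧
        ‖(s * (d + 1) / (1 - s * ∑ i, y i)) • y‖ < r := by
    intro y hy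
    have hsum : ∑ i, y i ≤ s * ‖y‖ := sum_le_sqrt_mul_norm d y
    have hny : 0 ≤ ‖y‖ := norm_nonneg y
    have hssum : s * ∑ i, y i ≤ d * ‖y‖ := by
      calc s * ∑ i, y i ≤ s * (s * ‖y‖) := by nlinarith
        _ = d * ‖y‖ := by rw [← mul_assoc, hss]
    have hlt1 : s * ∑ i, y i < 1 := by nlinarith
    refine ⟨hlt1, ?_⟩
    rw [norm_smul, Real.norm_eq_abs]
    have hc0 : 0 < s * (d + 1) / (1 - s * ∑ i, y i) := by
      apply div_pos (by positivity); linarith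
    rw [abs_of_pos hc0, div_mul_eq_mul_div, div_lt_iff₀ (by linarith)]
    nlinarith
  refine ⟨key, ?_⟩
  intro y hy
  rw [Metric.mem_ball, dist_zero_right, lt_div_iff₀ hden, mul_comm] at hy
  obtain ⟨hlt1, hnx⟩ := key y hy
  set c := s * (d + 1) / (1 - s * ∑ i, y i) with hc_def
  have hc0 : 0 < c := by
    apply div_pos (by positivity); linarith
  refine ⟨c • y, Metric.mem_ball.mpr (by rwa [dist_zero_right]), ?_⟩
  have hsumc : ∑ i, (c • y) i = c * ∑ i, y i := by
    simp [Finset.mul_sum]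
  simp only [hsumc]
  have hne : 1 - s * ∑ i, y i ≠ 0 := by linarith
  have hkey : s * ((d:ℝ) + 1 + c * ∑ i, y i) = c := by
    rw [hc_def]
    field_simp
    ring
  rw [hkey, smul_smul, inv_mul_cancel₀ (ne_of_gt hc0), one_smul]
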